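/- arXiv:2404.15338 — 5 statements merged into one kernel-verified Lean document; each statement's English description precedes it below -/
import Mathlib

section
/- Let f : ℝ → ℝ be twice continuously differentiable, and let r ∈ ℝ with f(r) = 0 and f'(r) ≠ 0. Then the Newton map N(x) = x - f(x)/f'(x) satisfies lim_{x → r, x ≠ r} (N(x) - r)/(x - r)² = f''(r)/(2·f'(r)). -/
/-- Newton map `N(x) = x - f(x)/f'(x)`. -/
noncomputable def newtonMap (f : ℝ → ℝ) (x : ℝ) : ℝ := x - f x / deriv f x

/-- quadratic convergence of the Newton map near a simple root:
`(N(x) - r)/(x - r)² → f''(r)/(2 f'(r))` as `x → r`, `x ≠ r`. -/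
theorem newton_quadratic_limit (f : ℝ → ℝ) (hf : ContDiff ℝ 2 f)
    (r : ℝ) (hr : f r = 0) (hr' : deriv f r ≠ 0) :
    Filter.Tendsto (fun x => (newtonMap f x - r) / (x - r) ^ 2)
      (nhdsWithin r {r}ᶜ)
      (nhds (deriv (deriv f) r / (2 * deriv f r))) := by
  have h2 : ContDiff ℝ ((1 : WithTop ℕ∞) + 1) f := by
    rw [show ((1 : WithTop ℕ∞) + 1) = 2 from rfl]; exact hf
  rw [contDiff_succ_iff_deriv] at h2
  obtain ⟨hfd, -, hf1⟩ := h2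
  rw [contDiff_one_iff_deriv] at hf1
  obtain ⟨hf'd, hf''c⟩ := hf1
  set f' := deriv f with hf'def
  set f'' := deriv (deriv f) with hf''def
  have hf'c : Continuous f' := hf'd.continuous
  -- g and h for L'Hôpital
  set g : ℝ → ℝ := fun x => f' x * (x - r) - f x with hg
  set h : ℝ → ℝ := fun x => f' x * (x - r) ^ 2 with hh
  have hgd : ∀ x : ℝ, HasDerivAt g (f'' x * (x - r)) x := by
    intro x
    have := (((hf'd x).hasDerivAt.mul ((hasDerivAt_id x).sub_const r)).sub
      (hfd x).hasDerivAt)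
    refine this.congr_deriv ?_
    show f'' x * (x - r) + f' x * 1 - f' x = f'' x * (x - r)
    ring
  have hhd : ∀ x : ℝ, HasDerivAt h (f'' x * (x - r) ^ 2 + f' x * (2 * (x - r))) x := by
    intro x
    have hp : HasDerivAt (fun y => (y - r) ^ 2) (2 * (x - r)) x := by
      have := (((hasDerivAt_id x).sub_const r).pow 2)
      refine this.congr_deriv ?_
      simp only [id_eq]
      push_cast
      ring
    exact (hf'd x).hasDerivAt.mul hp
  -- eventually deriv f ≠ 0 and related
  have hev : ∀ᶠ x in nhds r, f' x ≠ 0 :=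
    hf'c.continuousAt.eventually_ne hr'
  have hden : Filter.Tendsto (fun x => f'' x * (x - r) + 2 * f' x) (nhds r)
      (nhds (2 * f' r)) := by
    have : Filter.Tendsto (fun x => f'' x * (x - r) + 2 * f' x) (nhds r)
        (nhds (f'' r * (r - r) + 2 * f' r)) := by
      exact ((hf''c.tendsto r).mul (((continuous_id.sub continuous_const).tendsto r))).add
        ((hf'c.tendsto r).const_mul 2)
    simpa using this
  have hdenne : ∀ᶠ x in nhds r, f'' x * (x - r) + 2 * f' x ≠ 0 :=
    hden.eventually_ne (by simpa using mul_ne_zero two_ne_zero hr')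
  -- the L'Hôpital conclusion for g / h
  have hmain : Filter.Tendsto (fun x => g x / h x) (nhdsWithin r {r}ᶜ)
      (nhds (f'' r / (2 * f' r))) := by
    apply HasDerivAt.lhopital_zero_nhdsNE
    · exact Filter.Eventually.of_forall fun x => hgd x
    · exact Filter.Eventually.of_forall fun x => hhd x
    · filter_upwards [self_mem_nhdsWithin,
        (nhdsWithin_le_nhds : nhdsWithin r {r}ᶜ ≤ nhds r) hdenne] with x hx hx2
      have hxr : x - r ≠ 0 := sub_ne_zero.mpr hx
      have : f'' x * (x - r) ^ 2 + f' x * (2 * (x - r))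
          = (x - r) * (f'' x * (x - r) + 2 * f' x) := by ring
      rw [this]
      exact mul_ne_zero hxr hx2
    · have : Filter.Tendsto g (nhds r) (nhds (f' r * (r - r) - f r)) :=
        ((hf'c.tendsto r).mul (((continuous_id.sub continuous_const).tendsto r))).sub (hfd.continuous.tendsto r)
      refine Filter.Tendsto.mono_left ?_ nhdsWithin_le_nhds
      simpa [hr] using this
    · have : Filter.Tendsto h (nhds r) (nhds (f' r * (r - r) ^ 2)) :=
        (hf'c.tendsto r).mul ((((continuous_id.sub continuous_const).tendsto r)).pow 2)
      refine Filter.Tendsto.mono_left ?_ nhdsWithin_le_nhds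
      simpa using this
    · -- derivative quotient
      have hq : Filter.Tendsto (fun x => f'' x / (f'' x * (x - r) + 2 * f' x))
          (nhds r) (nhds (f'' r / (2 * f' r))) :=
        (hf''c.tendsto r).div hden (by simpa using mul_ne_zero two_ne_zero hr')
      refine Filter.Tendsto.congr' ?_ (hq.mono_left nhdsWithin_le_nhds)
      filter_upwards [self_mem_nhdsWithin] with x hx
      have hxr : x - r ≠ 0 := sub_ne_zero.mpr hx
      rw [show f'' x * (x - r) ^ 2 + f' x * (2 * (x - r))
          = (x - r) * (f'' x * (x - r) + 2 * f' x) by ring,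
        show f'' x * (x - r) = (x - r) * f'' x by ring,
        mul_div_mul_left _ _ hxr]
  -- transfer to the Newton map expression
  refine Filter.Tendsto.congr' ?_ hmain
  filter_upwards [self_mem_nhdsWithin,
    (nhdsWithin_le_nhds : nhdsWithin r {r}ᶜ ≤ nhds r) hev] with x hx hx'
  have hxr : x - r ≠ 0 := sub_ne_zero.mpr hx
  simp only [hg, hh, newtonMap, ← hf'def]
  field_simp
  ring
end

section
/- Let f : ℝ → ℝ be twice continuously differentiable, let r ∈ ℝ with f(r) = 0 and f'(r) ≠ 0, and let β ∈ ℝ. Then the extended Newton-Raphson map satisfies lim_{x → r, x ≠ r} (G_β(x) - r)/(x - r)² = (1 - β)·f''(r)/(2·f'(r)). -/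
open Filter Asymptotics Topology


/-- Extended Newton-Raphson map `G_β(x) = N(x) - β·f(N(x))/f'(x)`. -/
noncomputable def extNewtonMap (f : ℝ → ℝ) (β x : ℝ) : ℝ :=
  newtonMap f x - β * f (newtonMap f x) / deriv f x

/-- near a simple root, the extended Newton-Raphson map satisfies
`(G_β(x) - r)/(x - r)² → (1 - β)·f''(r)/(2 f'(r))` as `x → r`, `x ≠ r`. -/
theorem ext_newton_quadratic_limit (f : ℝ → ℝ) (hf : ContDiff ℝ 2 f)
    (r : ℝ) (hr : f r = 0) (hr' : deriv f r ≠ 0) (β : ℝ) :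
    Filter.Tendsto (fun x => (extNewtonMap f β x - r) / (x - r) ^ 2)
      (nhdsWithin r {r}ᶜ)
      (nhds ((1 - β) * deriv (deriv f) r / (2 * deriv f r))) := by
  have hdf : Differentiable ℝ f := hf.differentiable two_ne_zero
  have hf1 : ContDiff ℝ 1 (deriv f) := by
    have h2 : ContDiff ℝ (1 + 1) f := by exact_mod_cast hf
    exact (contDiff_succ_iff_deriv.mp h2).2.2
  have hdf' : Differentiable ℝ (deriv f) := hf1.differentiable one_ne_zero
  have hcf'' : Continuous (deriv (deriv f)) := hf1.continuous_deriv le_rfl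
  have hcf' : Continuous (deriv f) := hf1.continuous
  set a := deriv f r with ha
  set b := deriv (deriv f) r with hb
  have hne : ∀ᶠ x in 𝓝 r, deriv f x ≠ 0 :=
    (hcf'.continuousAt (x := r)).eventually_ne hr'
  have hne' : ∀ᶠ x in 𝓝[≠] r, deriv f x ≠ 0 := hne.filter_mono nhdsWithin_le_nhds
  have hxr : ∀ᶠ x in 𝓝[≠] r, x ≠ r := self_mem_nhdsWithin
  -- Step A: L'Hôpital
  have hU : Tendsto (fun x => (deriv f x * (x - r) - f x) / (x - r) ^ 2)
      (𝓝[≠] r) (𝓝 (b / 2)) := by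
    apply HasDerivAt.lhopital_zero_nhdsNE
      (f' := fun x => deriv (deriv f) x * (x - r)) (g' := fun x => 2 * (x - r))
    · filter_upwards with x
      have h1 : HasDerivAt (fun y => deriv f y * (y - r))
          (deriv (deriv f) x * (x - r) + deriv f x * 1) x :=
        (hdf' x).hasDerivAt.mul ((hasDerivAt_id x).sub_const r)
      have h2 : HasDerivAt (fun y => deriv f y * (y - r) - f y)
          (deriv (deriv f) x * (x - r) + deriv f x * 1 - deriv f x) x := h1.sub (hdf x).hasDerivAt
      convert h2 using 1
      ring
    · filter_upwards with x
      have h1 : HasDerivAt (fun y => (y - r) ^ 2)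
          (2 * (x - r) ^ 1 * 1) x := ((hasDerivAt_id x).sub_const r).pow 2
      convert h1 using 1
      ring
    · filter_upwards [hxr] with x hx
      exact mul_ne_zero two_ne_zero (sub_ne_zero.mpr hx)
    · apply tendsto_nhdsWithin_of_tendsto_nhds
      have : Continuous fun x => deriv f x * (x - r) - f x :=
        (hcf'.mul (continuous_id.sub continuous_const)).sub hdf.continuous
      simpa [hr] using this.tendsto r
    · apply tendsto_nhdsWithin_of_tendsto_nhds
      have : Continuous fun x : ℝ => (x - r) ^ 2 :=
        (continuous_id.sub continuous_const).pow 2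
      simpa using this.tendsto r
    · have h : Tendsto (fun x => deriv (deriv f) x / 2) (𝓝[≠] r) (𝓝 (b / 2)) := by
        apply tendsto_nhdsWithin_of_tendsto_nhds
        exact (hcf''.continuousAt (x := r)).div_const 2
      apply h.congr'
      filter_upwards [hxr] with x hx
      field_simp [sub_ne_zero.mpr hx]
  -- inverse of derivative
  have hinv : Tendsto (fun x => (deriv f x)⁻¹) (𝓝[≠] r) (𝓝 a⁻¹) :=
    tendsto_nhdsWithin_of_tendsto_nhds ((hcf'.continuousAt (x := r)).inv₀ hr')
  -- Step B: Newton ratio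
  have hN : Tendsto (fun x => (newtonMap f x - r) / (x - r) ^ 2)
      (𝓝[≠] r) (𝓝 (b / 2 * a⁻¹)) := by
    apply (hU.mul hinv).congr'
    filter_upwards [hne', hxr] with x h0 hx
    simp only [newtonMap]
    field_simp
    ring
  -- Step C: N tends to r
  have hNr : Tendsto (fun x => newtonMap f x) (𝓝[≠] r) (𝓝 r) := by
    have hsq : Tendsto (fun x : ℝ => (x - r) ^ 2) (𝓝[≠] r) (𝓝 0) := by
      apply tendsto_nhdsWithin_of_tendsto_nhds
      have : Continuous fun x : ℝ => (x - r) ^ 2 :=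
        (continuous_id.sub continuous_const).pow 2
      simpa using this.tendsto r
    have h := hN.mul hsq
    rw [mul_zero] at h
    have h2 : Tendsto (fun x => newtonMap f x - r) (𝓝[≠] r) (𝓝 0) := by
      apply h.congr'
      filter_upwards [hxr] with x hx
      exact div_mul_cancel₀ _ (pow_ne_zero 2 (sub_ne_zero.mpr hx))
    have := h2.add_const r
    simpa using this
  -- Step D: little-o from derivative at r
  have hphi : (fun y => f y - a * (y - r)) =o[𝓝 r] (fun y => y - r) := by
    have h := hasDerivAt_iff_isLittleO.mp (hdf r).hasDerivAt
    simpa [hr, mul_comm] using h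
  -- Step E: big-O
  have hO : (fun x => newtonMap f x - r) =O[𝓝[≠] r] (fun x => (x - r) ^ 2) := by
    have h1 := (hN.isBigO_one ℝ).mul (isBigO_refl (fun x : ℝ => (x - r) ^ 2) (𝓝[≠] r))
    apply IsBigO.congr' h1
    · filter_upwards [hxr] with x hx
      exact div_mul_cancel₀ _ (pow_ne_zero 2 (sub_ne_zero.mpr hx))
    · filter_upwards with x
      simp
  -- Step F
  have hlo : (fun x => f (newtonMap f x) - a * (newtonMap f x - r))
      =o[𝓝[≠] r] (fun x => (x - r) ^ 2) :=
    (hphi.comp_tendsto hNr).trans_isBigO hO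
  have h0 : Tendsto (fun x => (f (newtonMap f x) - a * (newtonMap f x - r)) / (x - r) ^ 2)
      (𝓝[≠] r) (𝓝 0) := hlo.tendsto_div_nhds_zero
  -- Step G
  have hFN : Tendsto (fun x => f (newtonMap f x) / (x - r) ^ 2) (𝓝[≠] r) (𝓝 (b / 2)) := by
    have h := h0.add (hN.const_mul a)
    have hval : (0 : ℝ) + a * (b / 2 * a⁻¹) = b / 2 := by
      field_simp
      ring
    rw [hval] at h
    apply h.congr
    intro x
    ring
  -- Final combination
  have hmain := hN.sub ((hFN.mul hinv).const_mul β)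
  have hval : b / 2 * a⁻¹ - β * (b / 2 * a⁻¹) = (1 - β) * b / (2 * a) := by
    field_simp
  rw [hval] at hmain
  apply hmain.congr
  intro x
  simp only [extNewtonMap]
  ring
end

section
/- Let f : ℝ → ℝ be three times continuously differentiable, and let r ∈ ℝ with f(r) = 0 and f'(r) ≠ 0. Then the extended Newton-Raphson map with β = 1 converges with at least cubic order: there exist constants C > 0 and δ > 0 such that for all x with |x - r| < δ, one has |G₁(x) - r| ≤ C·|x - r|³. -/
set_option maxHeartbeats 1000000

open Set

private lemma myLip {F F' : ℝ → ℝ} {s : Set ℝ} (hs : Convex ℝ s)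
    (hF : ∀ t ∈ s, HasDerivAt F (F' t) t) {C : ℝ}
    (hb : ∀ t ∈ s, |F' t| ≤ C) {x y : ℝ} (hx : x ∈ s) (hy : y ∈ s) :
    |F y - F x| ≤ C * |y - x| := by
  have := Convex.norm_image_sub_le_of_norm_hasDerivWithin_le
    (fun t ht => (hF t ht).hasDerivWithinAt) (C := C)
    (by simpa [Real.norm_eq_abs] using hb) hs hx hy
  simpa [Real.norm_eq_abs] using this

private lemma seg_bound {x y t : ℝ} (ht : t ∈ segment ℝ x y) : |t - x| ≤ |y - x| := by
  obtain ⟨a, b, ha, hb, hab, rfl⟩ := ht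
  have h : a • x + b • y - x = b * (y - x) := by
    simp only [smul_eq_mul]; linear_combination x * hab
  rw [h, abs_mul, abs_of_nonneg hb]
  nlinarith [abs_nonneg (y - x)]



/-- for `f` three times continuously differentiable with a simple
root `r`, the extended Newton-Raphson map with `β = 1` converges with at least
cubic order near `r`. -/
theorem ext_newton_cubic (f : ℝ → ℝ) (hf : ContDiff ℝ 3 f)
    (r : ℝ) (hr : f r = 0) (hr' : deriv f r ≠ 0) :
    ∃ C > 0, ∃ δ > 0, ∀ x : ℝ, |x - r| < δ →
      |extNewtonMap f 1 x - r| ≤ C * |x - r| ^ 3 := by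
  have h3 : ContDiff ℝ ((2:ℕ) + 1) f := by exact_mod_cast hf
  rw [contDiff_succ_iff_deriv] at h3
  obtain ⟨hdf, -, hf2⟩ := h3
  have h2 : ContDiff ℝ ((1:ℕ) + 1) (deriv f) := by exact_mod_cast hf2
  rw [contDiff_succ_iff_deriv] at h2
  obtain ⟨hdf', -, hf1⟩ := h2
  have hc1 : Continuous (deriv f) := hdf'.continuous
  have hc2 : Continuous (deriv (deriv f)) := hf1.continuous
  set s : Set ℝ := Metric.closedBall r 1 with hsdef
  have hconv : Convex ℝ s := convex_closedBall r 1
  obtain ⟨M0, hM0⟩ := (isCompact_closedBall r 1).exists_bound_of_continuousOn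
    hc2.continuousOn
  set M := max M0 1 with hMdef
  have hM1 : (1:ℝ) ≤ M := le_max_right _ _
  have hMpos : 0 < M := lt_of_lt_of_le one_pos hM1
  have hM : ∀ t ∈ s, |deriv (deriv f) t| ≤ M := fun t ht =>
    le_trans (by simpa [Real.norm_eq_abs] using hM0 t ht) (le_max_left _ _)
  have hlip : ∀ u ∈ s, ∀ v ∈ s, |deriv f v - deriv f u| ≤ M * |v - u| := by
    intro u hu v hv
    exact myLip hconv (fun t _ => (hdf' t).hasDerivAt) hM hu hv
  set m := |deriv f r| / 2 with hmdef
  have hmpos : 0 < m := half_pos (abs_pos.mpr hr')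
  obtain ⟨δ₀, hδ₀pos, hδ₀⟩ := Metric.continuousAt_iff.mp hc1.continuousAt m hmpos
  set K := M / m with hKdef
  have hKpos : 0 < K := div_pos hMpos hmpos
  have hKm : K * m = M := div_mul_cancel₀ M (ne_of_gt hmpos)
  refine ⟨2 * K ^ 2, by positivity, min δ₀ (min 1 (m / M)), by positivity, ?_⟩
  intro x hx
  have hx0 : |x - r| < δ₀ := lt_of_lt_of_le hx (min_le_left _ _)
  have hx1 : |x - r| ≤ 1 :=
    le_of_lt (lt_of_lt_of_le hx (le_trans (min_le_right _ _) (min_le_left _ _)))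
  have hxK : |x - r| ≤ m / M :=
    le_of_lt (lt_of_lt_of_le hx (le_trans (min_le_right _ _) (min_le_right _ _)))
  have hKx : K * |x - r| ≤ 1 := by
    rw [hKdef, div_mul_eq_mul_div, div_le_one hmpos]
    calc M * |x - r| ≤ M * (m / M) := mul_le_mul_of_nonneg_left hxK hMpos.le
      _ = m := by field_simp
  have hxs : x ∈ s := by
    rw [hsdef, Metric.mem_closedBall, Real.dist_eq]; exact hx1
  have hrs : r ∈ s := Metric.mem_closedBall_self (by norm_num)
  have hfx : m ≤ |deriv f x| := by
    have h := hδ₀ (show dist x r < δ₀ by rwa [Real.dist_eq])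
    rw [Real.dist_eq] at h
    have h2 := abs_sub_abs_le_abs_sub (deriv f r) (deriv f x)
    rw [abs_sub_comm] at h2
    rw [hmdef] at *
    linarith
  have hfxpos : 0 < |deriv f x| := lt_of_lt_of_le hmpos hfx
  have hfxne : deriv f x ≠ 0 := fun h => by simp [h] at hfxpos
  -- Step (a): Taylor-type estimate at x evaluated at r
  have hseg1 : segment ℝ x r ⊆ s := hconv.segment_subset hxs hrs
  have hFd1 : ∀ t ∈ segment ℝ x r,
      HasDerivAt (fun t => f t - deriv f x * t) (deriv f t - deriv f x) t := by
    intro t _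
    exact ((hdf t).hasDerivAt.sub ((hasDerivAt_id' t).const_mul (deriv f x))).congr_deriv (by ring)
  have ha : |f r - deriv f x * r - (f x - deriv f x * x)| ≤ M * |r - x| * |r - x| := by
    refine myLip (convex_segment x r) hFd1 (fun t ht => ?_)
      (left_mem_segment ℝ x r) (right_mem_segment ℝ x r)
    exact le_trans (hlip x hxs t (hseg1 ht)) (mul_le_mul_of_nonneg_left (seg_bound ht) hMpos.le)
  set N := newtonMap f x with hNdef
  have hNr : N - r = (f r - deriv f x * r - (f x - deriv f x * x)) / deriv f x := by
    rw [hNdef, newtonMap, hr]; field_simp; ring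
  have hNb : |N - r| ≤ K * |x - r| ^ 2 := by
    rw [hNr, abs_div, div_le_iff₀ hfxpos]
    have h1 : M * |r - x| * |r - x| = M * |x - r| ^ 2 := by
      rw [abs_sub_comm]; ring
    calc |f r - deriv f x * r - (f x - deriv f x * x)| ≤ M * |x - r| ^ 2 := by
          rw [← h1]; exact ha
      _ = K * m * |x - r| ^ 2 := by rw [hKm]
      _ = (K * |x - r| ^ 2) * m := by ring
      _ ≤ (K * |x - r| ^ 2) * |deriv f x| :=
          mul_le_mul_of_nonneg_left hfx (by positivity)
      _ = K * |x - r| ^ 2 * |deriv f x| := by ring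
  have hN1 : |N - r| ≤ |x - r| := by nlinarith [abs_nonneg (x - r), hNb, hKx]
  have hNs : N ∈ s := by
    rw [hsdef, Metric.mem_closedBall, Real.dist_eq]
    exact le_trans hN1 hx1
  -- Step (c): estimate f N against linearization at r with slope deriv f x
  have hseg2 : segment ℝ r N ⊆ s := hconv.segment_subset hrs hNs
  have hFd2 : ∀ t ∈ segment ℝ r N,
      HasDerivAt (fun t => f t - deriv f x * t) (deriv f t - deriv f x) t := by
    intro t _
    exact ((hdf t).hasDerivAt.sub ((hasDerivAt_id' t).const_mul (deriv f x))).congr_deriv (by ring)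
  have hc : |f N - deriv f x * N - (f r - deriv f x * r)| ≤
      M * (|N - r| + |x - r|) * |N - r| := by
    refine myLip (convex_segment r N) hFd2 (fun t ht => ?_)
      (left_mem_segment ℝ r N) (right_mem_segment ℝ r N)
    refine le_trans (hlip x hxs t (hseg2 ht)) ?_
    have h1 : |t - x| ≤ |t - r| + |x - r| := by
      calc |t - x| = |(t - r) + (r - x)| := by ring_nf
        _ ≤ |t - r| + |r - x| := abs_add_le _ _
        _ = |t - r| + |x - r| := by rw [abs_sub_comm r x]
    have h2 : |t - r| ≤ |N - r| := seg_bound ht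
    exact mul_le_mul_of_nonneg_left (by linarith) hMpos.le
  -- Final assembly
  have hG : extNewtonMap f 1 x - r =
      -(f N - deriv f x * N - (f r - deriv f x * r)) / deriv f x := by
    rw [extNewtonMap, ← hNdef, hr]; field_simp; ring
  rw [hG, abs_div, abs_neg, div_le_iff₀ hfxpos]
  have key : M * (|N - r| + |x - r|) * |N - r| ≤ 2 * K ^ 2 * |x - r| ^ 3 * m := by
    have hA : (0:ℝ) ≤ |x - r| := abs_nonneg _
    have hB : (0:ℝ) ≤ |N - r| := abs_nonneg _
    have h1 : |N - r| * |N - r| ≤ |x - r| * (K * |x - r| ^ 2) :=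
      mul_le_mul hN1 hNb hB hA
    have h2 : |x - r| * |N - r| ≤ |x - r| * (K * |x - r| ^ 2) :=
      mul_le_mul_of_nonneg_left hNb hA
    nlinarith [hKm, hMpos.le, hmpos.le, hKpos.le]
  calc |f N - deriv f x * N - (f r - deriv f x * r)| ≤
        M * (|N - r| + |x - r|) * |N - r| := hc
    _ ≤ 2 * K ^ 2 * |x - r| ^ 3 * m := key
    _ ≤ 2 * K ^ 2 * |x - r| ^ 3 * |deriv f x| :=
        mul_le_mul_of_nonneg_left hfx (by positivity)
end

section
/- Let f : ℝ → ℝ be continuous with f(x) = 0 if and only if x = x_r, and suppose that for every δ > 0 there exists ε > 0 such that |f(x)| ≥ ε whenever |x - x_r| ≥ δ. Assume that for every g > 0 the function x ↦ exp(-f(x)²/(2g²)) is integrable on ℝ. Let h : ℝ → ℝ be continuous and bounded. Then lim_{g → 0⁺} (∫ h(x)·exp(-f(x)²/(2g²)) dx) / (∫ exp(-f(x)²/(2g²)) dx) = h(x_r). -/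
open MeasureTheory

/-- Lower bound for the partition function via a small interval where `F^2 ≤ c`. -/
lemma laplace_Zlow (F : ℝ → ℝ) (g c a b : ℝ) (hg : 0 < g) (hab : a < b)
    (hc : ∀ x ∈ Set.Icc a b, F x ^ 2 ≤ c)
    (hI : Integrable (fun x : ℝ => Real.exp (-(F x) ^ 2 / (2 * g ^ 2)))) :
    (b - a) * Real.exp (-c / (2 * g ^ 2)) ≤
      ∫ x : ℝ, Real.exp (-(F x) ^ 2 / (2 * g ^ 2)) := by
  have hg2 : (0:ℝ) < 2 * g ^ 2 := by positivity
  calc (b - a) * Real.exp (-c / (2 * g ^ 2))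
      = ∫ _x in Set.Icc a b, Real.exp (-c / (2 * g ^ 2)) := by
        rw [setIntegral_const, Real.volume_real_Icc_of_le hab.le, smul_eq_mul]
    _ ≤ ∫ x in Set.Icc a b, Real.exp (-(F x) ^ 2 / (2 * g ^ 2)) := by
        refine setIntegral_mono_on (integrableOn_const ?_) hI.integrableOn
          measurableSet_Icc ?_
        · rw [Real.volume_Icc]; exact ENNReal.ofReal_ne_top
        · intro x hx
          apply Real.exp_le_exp.mpr
          have h1 := hc x hx
          apply div_le_div_of_nonneg_right (by linarith) hg2.le |>.trans_eq rfl
    _ ≤ _ := setIntegral_le_integral hI (Filter.Eventually.of_forall fun x => (Real.exp_pos _).le)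

/-- Outer bound. -/
lemma laplace_Zouter (F : ℝ → ℝ) (g ε : ℝ) (hg : 0 < g) (hg1 : g ≤ 1) (hε : 0 < ε)
    (S : Set ℝ) (hSm : MeasurableSet S) (hS : ∀ x ∈ S, ε ≤ |F x|)
    (hI1 : Integrable (fun x : ℝ => Real.exp (-(F x) ^ 2 / (2 * (1:ℝ) ^ 2))))
    (hIg : Integrable (fun x : ℝ => Real.exp (-(F x) ^ 2 / (2 * g ^ 2)))) :
    ∫ x in S, Real.exp (-(F x) ^ 2 / (2 * g ^ 2)) ≤
      Real.exp (ε ^ 2 / 2 - ε ^ 2 / (2 * g ^ 2)) *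
        ∫ x : ℝ, Real.exp (-(F x) ^ 2 / (2 * (1:ℝ) ^ 2)) := by
  have hg2 : (0:ℝ) < 2 * g ^ 2 := by positivity
  set K := Real.exp (ε ^ 2 / 2 - ε ^ 2 / (2 * g ^ 2)) with hK
  have hK0 : 0 < K := Real.exp_pos _
  calc ∫ x in S, Real.exp (-(F x) ^ 2 / (2 * g ^ 2))
      ≤ ∫ x in S, K * Real.exp (-(F x) ^ 2 / (2 * (1:ℝ) ^ 2)) := by
        refine setIntegral_mono_on hIg.integrableOn (hI1.const_mul K).integrableOn hSm ?_
        intro x hx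
        rw [hK, ← Real.exp_add]
        apply Real.exp_le_exp.mpr
        have hfx : ε ^ 2 ≤ F x ^ 2 := by
          have := hS x hx
          calc ε ^ 2 ≤ |F x| ^ 2 := pow_le_pow_left₀ hε.le this 2
            _ = F x ^ 2 := sq_abs _
        have hd : (1:ℝ) / 2 ≤ 1 / (2 * g ^ 2) :=
          one_div_le_one_div_of_le hg2 (by nlinarith)
        have key : 0 ≤ (F x ^ 2 - ε ^ 2) * (1 / (2 * g ^ 2) - 1 / 2) :=
          mul_nonneg (by linarith) (by linarith)
        have hring : (F x ^ 2 - ε ^ 2) * (1 / (2 * g ^ 2) - 1 / 2)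
            = (ε ^ 2 / 2 - ε ^ 2 / (2 * g ^ 2) + -(F x) ^ 2 / (2 * (1:ℝ) ^ 2))
              - (-(F x) ^ 2 / (2 * g ^ 2)) := by ring
        linarith [hring ▸ key]
    _ ≤ ∫ x : ℝ, K * Real.exp (-(F x) ^ 2 / (2 * (1:ℝ) ^ 2)) :=
        setIntegral_le_integral (hI1.const_mul K)
          (Filter.Eventually.of_forall fun x => by positivity)
    _ = K * ∫ x : ℝ, Real.exp (-(F x) ^ 2 / (2 * (1:ℝ) ^ 2)) := MeasureTheory.integral_const_mul _ _

set_option maxHeartbeats 2000000 in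
/-- Laplace concentration of the root-finding partition function:
as `g ↓ 0`, the expectation `⟨h⟩ = Z(g)⁻¹·∫ h(x)·exp(-f(x)²/(2g²)) dx`
converges to `h(x_r)`, the value of `h` at the unique root of `f`. -/
theorem laplace_concentration (f : ℝ → ℝ) (hf : Continuous f) (xr : ℝ)
    (hroot : ∀ x, f x = 0 ↔ x = xr)
    (hsep : ∀ δ > 0, ∃ ε > 0, ∀ x, δ ≤ |x - xr| → ε ≤ |f x|)
    (hint : ∀ g > 0,
      Integrable (fun x : ℝ => Real.exp (-(f x) ^ 2 / (2 * g ^ 2))))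
    (h : ℝ → ℝ) (hh : Continuous h) (M : ℝ) (hM : ∀ x, |h x| ≤ M) :
    Filter.Tendsto
      (fun g : ℝ =>
        (∫ x : ℝ, h x * Real.exp (-(f x) ^ 2 / (2 * g ^ 2))) /
          (∫ x : ℝ, Real.exp (-(f x) ^ 2 / (2 * g ^ 2))))
      (nhdsWithin 0 (Set.Ioi 0)) (nhds (h xr)) := by
  have hfxr : f xr = 0 := (hroot xr).mpr rfl
  have hM0 : 0 ≤ M := (abs_nonneg _).trans (hM xr)
  rw [Metric.tendsto_nhdsWithin_nhds]
  intro η hη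
  -- δ from continuity of h at xr
  obtain ⟨δ, hδ0, hδ⟩ := Metric.continuous_iff.mp hh xr (η / 2) (by positivity)
  -- ε from the separation hypothesis
  obtain ⟨ε, hε0, hεsep⟩ := hsep δ hδ0
  -- ρ0 from continuity of f at xr
  obtain ⟨ρ0, hρ0, hρ⟩ := Metric.continuous_iff.mp hf xr (ε / 2) (by positivity)
  have hab : xr - ρ0 / 2 < xr + ρ0 / 2 := by linarith
  have hcIcc : ∀ x ∈ Set.Icc (xr - ρ0 / 2) (xr + ρ0 / 2), f x ^ 2 ≤ ε ^ 2 / 4 := by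
    intro x hx
    obtain ⟨hx1, hx2⟩ := hx
    have hdx : dist x xr < ρ0 := by
      rw [Real.dist_eq, abs_lt]; constructor <;> linarith
    have := hρ x hdx
    rw [hfxr, Real.dist_eq, sub_zero, abs_lt] at this
    nlinarith [this.1, this.2]
  set Z1 : ℝ := ∫ x : ℝ, Real.exp (-(f x) ^ 2 / (2 * (1:ℝ) ^ 2)) with hZ1
  have hI1 : Integrable (fun x : ℝ => Real.exp (-(f x) ^ 2 / (2 * (1:ℝ) ^ 2))) :=
    hint 1 one_pos
  have hZ1nn : 0 ≤ Z1 :=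
    integral_nonneg fun x => (Real.exp_pos _).le
  set A : ℝ := 2 * M * Real.exp (ε ^ 2 / 2) * Z1 with hA
  have hA0 : 0 ≤ A := by positivity
  set c : ℝ := η * ρ0 * 3 * ε ^ 2 / (16 * (A + 1)) with hc
  have hc0 : 0 < c := by positivity
  refine ⟨min 1 (Real.sqrt c), lt_min one_pos (Real.sqrt_pos.mpr hc0), ?_⟩
  intro g hgmem hgd
  have hg : 0 < g := hgmem
  rw [Real.dist_eq, sub_zero, abs_of_pos hg] at hgd
  have hg1 : g ≤ 1 := ((lt_min_iff.mp hgd).1).le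
  have hgc : g ^ 2 < c := (Real.lt_sqrt hg.le).mp (lt_min_iff.mp hgd).2
  have hg2 : (0:ℝ) < 2 * g ^ 2 := by positivity
  have hIg := hint g hg
  set W : ℝ → ℝ := fun x => Real.exp (-(f x) ^ 2 / (2 * g ^ 2)) with hW
  set Z : ℝ := ∫ x : ℝ, W x with hZ
  set N : ℝ := ∫ x : ℝ, h x * W x with hN
  -- lower bound for Z
  have hZlow : ρ0 * Real.exp (-(ε ^ 2 / 4) / (2 * g ^ 2)) ≤ Z := by
    have := laplace_Zlow f g (ε ^ 2 / 4) (xr - ρ0 / 2) (xr + ρ0 / 2) hg hab hcIcc hIg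
    have heq : xr + ρ0 / 2 - (xr - ρ0 / 2) = ρ0 := by ring
    rw [heq] at this
    exact this
  have hZpos : 0 < Z := lt_of_lt_of_le (by positivity) hZlow
  -- the outer set
  set S : Set ℝ := {x | δ ≤ |x - xr|} with hSdef
  have hSm : MeasurableSet S :=
    measurableSet_le measurable_const (continuous_abs.comp
      (continuous_id.sub continuous_const)).measurable
  have hOuter : ∫ x in S, W x ≤ Real.exp (ε ^ 2 / 2 - ε ^ 2 / (2 * g ^ 2)) * Z1 :=
    laplace_Zouter f g ε hg hg1 hε0 S hSm (fun x hx => hεsep x hx) hI1 hIg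
  -- integrability facts
  have hWnn : ∀ x, 0 ≤ W x := fun x => (Real.exp_pos _).le
  have hq_int : Integrable (fun x => |h x - h xr| * W x) := by
    refine hIg.bdd_mul (c := 2 * M) ((hh.sub continuous_const).abs).aestronglyMeasurable (Filter.Eventually.of_forall fun x => ?_)
    rw [Real.norm_eq_abs, abs_abs]
    calc |h x - h xr| ≤ |h x| + |h xr| := abs_sub _ _
      _ ≤ 2 * M := by linarith [hM x, hM xr]
  have hN_int : Integrable (fun x => h x * W x) := by
    refine hIg.bdd_mul (c := M) hh.aestronglyMeasurable (Filter.Eventually.of_forall fun x => ?_)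
    rw [Real.norm_eq_abs]; exact hM x
  -- numerator identity and bound
  have hnum : N - h xr * Z = ∫ x, (h x - h xr) * W x := by
    rw [hN, hZ, ← MeasureTheory.integral_const_mul,
      ← integral_sub hN_int (hIg.const_mul (h xr))]
    congr 1; funext x; ring
  have habs : |N - h xr * Z| ≤ ∫ x, |h x - h xr| * W x := by
    rw [hnum]
    have h1 : ‖∫ x, (h x - h xr) * W x‖ ≤ ∫ x, ‖(h x - h xr) * W x‖ :=
      norm_integral_le_integral_norm _
    rw [Real.norm_eq_abs] at h1
    refine h1.trans (le_of_eq ?_)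
    congr 1; funext x
    rw [Real.norm_eq_abs, abs_mul, abs_of_nonneg (hWnn x)]
  have hsplit : ∫ x, |h x - h xr| * W x
      = (∫ x in S, |h x - h xr| * W x) + ∫ x in Sᶜ, |h x - h xr| * W x :=
    (integral_add_compl hSm hq_int).symm
  -- inner bound
  have hinner : ∫ x in Sᶜ, |h x - h xr| * W x ≤ η / 2 * Z := by
    calc ∫ x in Sᶜ, |h x - h xr| * W x ≤ ∫ x in Sᶜ, η / 2 * W x := by
          refine setIntegral_mono_on hq_int.integrableOn
            ((hIg.const_mul (η / 2)).integrableOn) hSm.compl ?_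
          intro x hx
          have hx' : |x - xr| < δ := not_le.mp hx
          have := hδ x (by rwa [Real.dist_eq])
          rw [Real.dist_eq] at this
          exact mul_le_mul_of_nonneg_right this.le (hWnn x)
      _ = η / 2 * ∫ x in Sᶜ, W x := MeasureTheory.integral_const_mul _ _
      _ ≤ η / 2 * Z := by
          refine mul_le_mul_of_nonneg_left ?_ (by positivity)
          exact setIntegral_le_integral hIg (Filter.Eventually.of_forall hWnn)
  -- outer bound
  have houter : ∫ x in S, |h x - h xr| * W x ≤ 2 * M * ∫ x in S, W x := by
    calc ∫ x in S, |h x - h xr| * W x ≤ ∫ x in S, 2 * M * W x := by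
          refine setIntegral_mono_on hq_int.integrableOn
            ((hIg.const_mul (2 * M)).integrableOn) hSm ?_
          intro x _
          refine mul_le_mul_of_nonneg_right ?_ (hWnn x)
          calc |h x - h xr| ≤ |h x| + |h xr| := abs_sub _ _
            _ ≤ 2 * M := by linarith [hM x, hM xr]
      _ = 2 * M * ∫ x in S, W x := MeasureTheory.integral_const_mul _ _
  -- the exponential smallness
  set E : ℝ := Real.exp (-(3 * ε ^ 2) / (8 * g ^ 2)) with hE
  have hE0 : 0 < E := Real.exp_pos _
  have hexp_split : Real.exp (ε ^ 2 / 2 - ε ^ 2 / (2 * g ^ 2))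
      = Real.exp (ε ^ 2 / 2) * E * Real.exp (-(ε ^ 2 / 4) / (2 * g ^ 2)) := by
    rw [hE, ← Real.exp_add, ← Real.exp_add]
    congr 1
    field_simp
    ring
  have hE1 : E * (3 * ε ^ 2 / (8 * g ^ 2)) < 1 := by
    set t : ℝ := 3 * ε ^ 2 / (8 * g ^ 2) with ht
    have ht0 : 0 < t := by positivity
    have htlt : t < Real.exp t := by
      have := Real.add_one_le_exp t; linarith
    have : E = (Real.exp t)⁻¹ := by
      rw [hE, ht, ← Real.exp_neg]; congr 1; ring
    rw [this, inv_mul_eq_div]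
    exact (div_lt_one (Real.exp_pos _)).mpr htlt
  have hE2 : E * (3 * ε ^ 2) < 8 * g ^ 2 := by
    have h8 : (0:ℝ) < 8 * g ^ 2 := by positivity
    calc E * (3 * ε ^ 2) = E * (3 * ε ^ 2 / (8 * g ^ 2)) * (8 * g ^ 2) := by
          field_simp
      _ < 1 * (8 * g ^ 2) := mul_lt_mul_of_pos_right hE1 h8
      _ = 8 * g ^ 2 := one_mul _
  have hgc' : g ^ 2 * (16 * (A + 1)) < η * ρ0 * 3 * ε ^ 2 :=
    (lt_div_iff₀ (by positivity)).mp hgc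
  have hAE : A * E < η / 2 * ρ0 := by
    have h1 : A * (E * (3 * ε ^ 2)) ≤ A * (8 * g ^ 2) :=
      mul_le_mul_of_nonneg_left hE2.le hA0
    have hgsq : 0 < g ^ 2 := by positivity
    have h2 : A * (8 * g ^ 2) + 8 * g ^ 2 < η * ρ0 * 3 * ε ^ 2 / 2 := by nlinarith [hgc']
    have h3 : A * (E * (3 * ε ^ 2)) < η * ρ0 * 3 * ε ^ 2 / 2 := by nlinarith [h1, hgsq, hA0]
    have hε2 : (0:ℝ) < 3 * ε ^ 2 := by positivity
    nlinarith [h3, hε2]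
  -- combine
  have hkey : 2 * M * (∫ x in S, W x) < η / 2 * Z := by
    calc 2 * M * (∫ x in S, W x)
        ≤ 2 * M * (Real.exp (ε ^ 2 / 2 - ε ^ 2 / (2 * g ^ 2)) * Z1) := by
          refine mul_le_mul_of_nonneg_left hOuter (by positivity)
      _ = A * E * Real.exp (-(ε ^ 2 / 4) / (2 * g ^ 2)) := by
          rw [hexp_split, hA]; ring
      _ < η / 2 * ρ0 * Real.exp (-(ε ^ 2 / 4) / (2 * g ^ 2)) :=
          mul_lt_mul_of_pos_right hAE (Real.exp_pos _)
      _ = η / 2 * (ρ0 * Real.exp (-(ε ^ 2 / 4) / (2 * g ^ 2))) := by ring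
      _ ≤ η / 2 * Z := mul_le_mul_of_nonneg_left hZlow (by positivity)
  have hSnn : 0 ≤ ∫ x in S, W x :=
    setIntegral_nonneg hSm fun x _ => hWnn x
  have hfinal : |N - h xr * Z| < η * Z := by
    calc |N - h xr * Z| ≤ ∫ x, |h x - h xr| * W x := habs
      _ = (∫ x in S, |h x - h xr| * W x) + ∫ x in Sᶜ, |h x - h xr| * W x := hsplit
      _ ≤ 2 * M * (∫ x in S, W x) + η / 2 * Z := add_le_add houter hinner
      _ < η / 2 * Z + η / 2 * Z := by linarith [hkey]
      _ = η * Z := by ring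
  rw [Real.dist_eq]
  have hdiv : N / Z - h xr = (N - h xr * Z) / Z := by
    field_simp
  rw [hdiv, abs_div, abs_of_pos hZpos, div_lt_iff₀ hZpos]
  linarith [hfinal]
end

section
/- Let f : ℝ → ℝ be three times continuously differentiable, and let r ∈ ℝ with f(r) = 0, f'(r) ≠ 0, and f''(r) = 0. Then the Newton map N(x) = x - f(x)/f'(x) converges with at least cubic order at r: there exist constants C > 0 and δ > 0 such that for all x with |x - r| < δ, one has |N(x) - r| ≤ C·|x - r|³. -/
/-- at a simple root where `f''(r) = 0`, the Newton map converges
with at least cubic order. -/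
theorem newton_cubic_of_vanishing_curvature (f : ℝ → ℝ) (hf : ContDiff ℝ 3 f)
    (r : ℝ) (hr : f r = 0) (hr' : deriv f r ≠ 0)
    (hr'' : deriv (deriv f) r = 0) :
    ∃ C > 0, ∃ δ > 0, ∀ x : ℝ, |x - r| < δ →
      |newtonMap f x - r| ≤ C * |x - r| ^ 3 := by
  have h3 : ContDiff ℝ ((2 : WithTop ℕ∞) + 1) f := by
    rw [show ((2 : WithTop ℕ∞) + 1) = 3 by norm_num]; exact hf
  rw [contDiff_succ_iff_deriv] at h3
  obtain ⟨hd0, -, h2⟩ := h3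
  have h2' : ContDiff ℝ ((1 : WithTop ℕ∞) + 1) (deriv f) := by
    rw [show ((1 : WithTop ℕ∞) + 1) = 2 by norm_num]; exact h2
  rw [contDiff_succ_iff_deriv] at h2'
  obtain ⟨hd1, -, h1⟩ := h2'
  have h1' : ContDiff ℝ ((0 : WithTop ℕ∞) + 1) (deriv (deriv f)) := by
    rw [show ((0 : WithTop ℕ∞) + 1) = 1 by norm_num]; exact h1
  rw [contDiff_succ_iff_deriv] at h1'
  obtain ⟨hd2, -, h0⟩ := h1'
  have hc3 : Continuous (deriv (deriv (deriv f))) := h0.continuous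
  -- bound on third derivative on closed ball of radius 1
  obtain ⟨L, hL⟩ := (isCompact_closedBall r 1).exists_bound_of_continuousOn
    hc3.continuousOn
  have hL0 : 0 ≤ L := le_trans (norm_nonneg _) (hL r (Metric.mem_closedBall_self zero_le_one))
  -- |f''(t)| ≤ L * |t - r| on the ball
  have hf2 : ∀ t ∈ Metric.closedBall r 1, |deriv (deriv f) t| ≤ L * |t - r| := by
    intro t ht
    have := Convex.norm_image_sub_le_of_norm_deriv_le
      (f := deriv (deriv f)) (s := Metric.closedBall r 1)
      (fun x _ => hd2 x) hL (convex_closedBall r 1)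
      (Metric.mem_closedBall_self zero_le_one) ht
    simpa [hr'', Real.norm_eq_abs] using this
  -- continuity of f' at r: lower bound near r
  have hcont : ContinuousAt (deriv f) r := hd1.continuous.continuousAt
  obtain ⟨δ₁, hδ₁, hball⟩ := Metric.continuousAt_iff.mp hcont (|deriv f r| / 2)
    (by positivity)
  set δ := min δ₁ 1 with hδdef
  have hδpos : 0 < δ := lt_min hδ₁ one_pos
  refine ⟨2 * (L + 1) / |deriv f r|, by positivity, δ, hδpos, ?_⟩
  intro x hx
  have hx1 : |x - r| ≤ 1 := le_of_lt (lt_of_lt_of_le hx (min_le_right _ _))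
  have hxball : x ∈ Metric.closedBall r 1 := by
    simpa [Metric.mem_closedBall, Real.dist_eq] using hx1
  -- lower bound on f'(x)
  have hfx : |deriv f r| / 2 ≤ |deriv f x| := by
    have hd : dist x r < δ₁ := by
      rw [Real.dist_eq]; exact lt_of_lt_of_le hx (min_le_left _ _)
    have h := hball hd
    rw [Real.dist_eq] at h
    have h2 := abs_sub_abs_le_abs_sub (deriv f r) (deriv f x)
    rw [abs_sub_comm] at h2
    linarith
  have hfxne : deriv f x ≠ 0 := by
    intro h
    rw [h, abs_zero] at hfx
    have : 0 < |deriv f r| := abs_pos.mpr hr'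
    linarith
  -- the auxiliary function g
  set g : ℝ → ℝ := fun t => deriv f t * (t - r) - f t with hg
  have hgderiv : ∀ t : ℝ, HasDerivAt g (deriv (deriv f) t * (t - r)) t := by
    intro t
    have h1 : HasDerivAt (fun t => deriv f t * (t - r))
        (deriv (deriv f) t * (t - r) + deriv f t * 1) t :=
      ((hd1 t).hasDerivAt).mul ((hasDerivAt_id t).sub_const r)
    have h2' := h1.sub (hd0 t).hasDerivAt
    have heq : deriv (deriv f) t * (t - r)
        = (deriv (deriv f) t * (t - r) + deriv f t * 1) - deriv f t := by ring
    rw [heq]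
    exact h2'
  have hmem : ∀ t ∈ Set.uIcc r x, |t - r| ≤ |x - r| := by
    intro t ht
    rw [Set.mem_uIcc] at ht
    rcases ht with ⟨ha, hb⟩ | ⟨ha, hb⟩ <;> rw [abs_le] <;>
      constructor <;> cases abs_cases (x - r) <;> linarith [And.intro ha hb]
  have hsub : Set.uIcc r x ⊆ Metric.closedBall r 1 := by
    intro t ht
    simp only [Metric.mem_closedBall, Real.dist_eq]
    exact le_trans (hmem t ht) hx1
  have hbound : ∀ t ∈ Set.uIcc r x, ‖deriv g t‖ ≤ L * |x - r| * |x - r| := by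
    intro t ht
    rw [(hgderiv t).deriv, Real.norm_eq_abs, abs_mul]
    have h2 := hf2 t (hsub ht)
    have hm := hmem t ht
    calc |deriv (deriv f) t| * |t - r| ≤ (L * |t - r|) * |t - r| :=
          mul_le_mul_of_nonneg_right h2 (abs_nonneg _)
      _ ≤ (L * |x - r|) * |x - r| := by
          have := mul_le_mul hm hm (abs_nonneg _) (abs_nonneg _)
          nlinarith
      _ = L * |x - r| * |x - r| := by ring
  have hgx : |g x| ≤ L * |x - r| * |x - r| * |x - r| := by
    have hcv := Convex.norm_image_sub_le_of_norm_deriv_le (f := g)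
      (fun t _ => (hgderiv t).differentiableAt) hbound (convex_uIcc r x)
      Set.left_mem_uIcc Set.right_mem_uIcc
    simpa [hg, hr, Real.norm_eq_abs] using hcv
  have hApos : 0 < |deriv f r| := abs_pos.mpr hr'
  have hBpos : 0 < |deriv f x| := lt_of_lt_of_le (by positivity) hfx
  have hN : |newtonMap f x - r| = |g x| / |deriv f x| := by
    rw [← abs_div]
    congr 1
    rw [newtonMap, hg]
    field_simp
    ring
  rw [hN]
  calc |g x| / |deriv f x| ≤ (L * |x - r| ^ 3) / (|deriv f r| / 2) := by
        apply div_le_div₀ (by positivity) ?_ (by positivity) hfx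
        nlinarith [abs_nonneg (x - r)]
    _ = 2 * L / |deriv f r| * |x - r| ^ 3 := by
        field_simp
    _ ≤ 2 * (L + 1) / |deriv f r| * |x - r| ^ 3 := by
        gcongr
        linarith
end
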